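/- Let S be any n×n matrix over ℤ[t,t⁻¹], let J be S padded with a last row (0,…,0,1) and last column (0,…,0,1)ᵀ, and let Ω' be the identity of size n+1 except with bottom-right 2×2 block [[1−t, −t²],[1, 1+t]]. Then det(J·Ω' − I) = t · det(S − I). -/

import Mathlib

open Matrix LaurentPolynomial

/-- Pad an `n × n` matrix with a last row `(0,…,0,1)` and last column `(0,…,0,1)ᵀ`. -/
noncomputable def pad (n : ℕ) (S : Matrix (Fin n) (Fin n) (LaurentPolynomial ℤ)) :
    Matrix (Fin (n + 1)) (Fin (n + 1)) (LaurentPolynomial ℤ) :=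
  Matrix.of fun i j =>
    if hi : (i : ℕ) < n then
      if hj : (j : ℕ) < n then S ⟨i, hi⟩ ⟨j, hj⟩ else 0
    else if (j : ℕ) < n then 0 else 1

/-- The `(n+1) × (n+1)` identity except the bottom-right `2 × 2` block is
`[[1-t, -t²], [1, 1+t]]` (requires `1 ≤ n`). -/
noncomputable def wadaStabInv (n : ℕ) (hn : 1 ≤ n) :
    Matrix (Fin (n + 1)) (Fin (n + 1)) (LaurentPolynomial ℤ) :=
  1 + Matrix.single ⟨n - 1, by omega⟩ ⟨n - 1, by omega⟩ (-(T 1))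
    + Matrix.single ⟨n - 1, by omega⟩ ⟨n, by omega⟩ (-(T 2))
    + Matrix.single ⟨n, by omega⟩ ⟨n - 1, by omega⟩ 1
    + Matrix.single ⟨n, by omega⟩ ⟨n, by omega⟩ (T 1)

set_option maxHeartbeats 1000000

theorem stmt16 (n : ℕ) (hn : 1 ≤ n) (S : Matrix (Fin n) (Fin n) (LaurentPolynomial ℤ)) :
    (pad n S * wadaStabInv n hn - 1).det = T 1 * (S - 1).det := by
  classical
  have hn1 : n - 1 < n + 1 := by omega
  have hnn : n < n + 1 := by omega
  have hn1n : n - 1 < n := by omega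
  have h21 : (T 2 : LaurentPolynomial ℤ) * T (-1) = T 1 := by
    rw [← T_add]; norm_num
  have h11 : (T 1 : LaurentPolynomial ℤ) * T (-1) = 1 := by
    rw [← T_add]; norm_num
  set A : Matrix (Fin n) (Fin n) (LaurentPolynomial ℤ) :=
    Matrix.of fun i j =>
      (S - 1) i j + (if (j : ℕ) = n - 1 then -(T 1) * S i ⟨n - 1, hn1n⟩ else 0) with hA
  set B : Matrix (Fin n) (Fin 1) (LaurentPolynomial ℤ) :=
    Matrix.of fun i _ => -(T 2) * S i ⟨n - 1, hn1n⟩ with hB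
  set C : Matrix (Fin 1) (Fin n) (LaurentPolynomial ℤ) :=
    Matrix.of fun _ j => if (j : ℕ) = n - 1 then 1 else 0 with hC
  set D : Matrix (Fin 1) (Fin 1) (LaurentPolynomial ℤ) :=
    Matrix.of fun _ _ => T 1 with hD
  set W : Matrix (Fin 1) (Fin 1) (LaurentPolynomial ℤ) :=
    Matrix.of fun _ _ => T (-1) with hW
  have hTT : W * D = 1 := by
    apply Matrix.ext; intro i j
    obtain rfl : i = 0 := Subsingleton.elim i 0
    obtain rfl : j = 0 := Subsingleton.elim j 0
    rw [Matrix.mul_apply, Fin.sum_univ_one, hW, hD, Matrix.one_apply_eq]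
    simp only [Matrix.of_apply]
    rw [← T_add]; norm_num
  have hTT' : D * W = 1 := by
    apply Matrix.ext; intro i j
    obtain rfl : i = 0 := Subsingleton.elim i 0
    obtain rfl : j = 0 := Subsingleton.elim j 0
    rw [Matrix.mul_apply, Fin.sum_univ_one, hW, hD, Matrix.one_apply_eq]
    simp only [Matrix.of_apply]
    rw [← T_add]; norm_num
  haveI hInvD : Invertible D := ⟨W, hTT, hTT'⟩
  have hinv : ⅟D = W := invOf_eq_right_inv hTT'
  -- useful pad values
  have hpadval : ∀ (i : Fin n), pad n S (Fin.castAdd 1 i) ⟨n - 1, hn1⟩ = S i ⟨n - 1, hn1n⟩ := by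
    intro i; simp [pad, i.isLt, hn1n]
  have hpadn : ∀ (i : Fin n), pad n S (Fin.castAdd 1 i) ⟨n, hnn⟩ = 0 := by
    intro i; simp [pad, i.isLt]
  have hpadSS : ∀ (i j : Fin n), pad n S (Fin.castAdd 1 i) (Fin.castAdd 1 j) = S i j := by
    intro i j; simp [pad, i.isLt, j.isLt]
  have hpadrow : ∀ k : Fin (n + 1), pad n S (⟨n, hnn⟩ : Fin (n + 1)) k
      = if (k : ℕ) < n then 0 else 1 := by
    intro k; simp [pad]
  have hne_nn1 : (⟨n, hnn⟩ : Fin (n + 1)) ≠ (⟨n - 1, hn1⟩ : Fin (n + 1)) := by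
    intro h; have := congrArg Fin.val h; simp at this; omega
  have hne_n1n : (⟨n - 1, hn1⟩ : Fin (n + 1)) ≠ (⟨n, hnn⟩ : Fin (n + 1)) := by
    intro h; have := congrArg Fin.val h; simp at this; omega
  have hsub : (pad n S * wadaStabInv n hn - 1).submatrix finSumFinEquiv finSumFinEquiv
      = fromBlocks A B C D := by
    apply Matrix.ext; intro i j
    cases i with
    | inl i =>
      cases j with
      | inl j =>
        simp only [Matrix.submatrix_apply, finSumFinEquiv_apply_left, fromBlocks_apply₁₁,
          wadaStabInv, Matrix.mul_add, Matrix.mul_one, Matrix.sub_apply, Matrix.add_apply]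
        have h1 : Fin.castAdd 1 j ≠ (⟨n, hnn⟩ : Fin (n + 1)) := by
          intro h; have := congrArg Fin.val h; simp at this; omega
        rw [Matrix.mul_single_apply_of_ne _ _ _ _ _ h1,
          Matrix.mul_single_apply_of_ne _ _ _ _ _ h1]
        have hone : (1 : Matrix (Fin (n + 1)) (Fin (n + 1)) (LaurentPolynomial ℤ))
            (Fin.castAdd 1 i) (Fin.castAdd 1 j)
            = (1 : Matrix (Fin n) (Fin n) (LaurentPolynomial ℤ)) i j := by
          simp only [Matrix.one_apply]
          congr 1
          simp [Fin.ext_iff]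
        by_cases hj : (j : ℕ) = n - 1
        · have h2 : Fin.castAdd 1 j = (⟨n - 1, hn1⟩ : Fin (n + 1)) := by
            apply Fin.ext; simpa using hj
          have hj' : j = (⟨n - 1, hn1n⟩ : Fin n) := Fin.ext hj
          rw [hone, h2, Matrix.mul_single_apply_same,
            Matrix.mul_single_apply_same]
          simp only [hpadval, hpadn]
          simp only [hA, Matrix.of_apply, hj, if_pos, Matrix.sub_apply, ← hj']
          ring
        · have h2 : Fin.castAdd 1 j ≠ (⟨n - 1, hn1⟩ : Fin (n + 1)) := by
            intro h; have := congrArg Fin.val h; simp at this; omega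
          rw [Matrix.mul_single_apply_of_ne _ _ _ _ _ h2,
            Matrix.mul_single_apply_of_ne _ _ _ _ _ h2,
            hone]
          simp only [hpadSS]
          simp only [hA, Matrix.of_apply, hj, if_false, Matrix.sub_apply]
          ring
      | inr j =>
        obtain rfl : j = 0 := Subsingleton.elim j 0
        simp only [Matrix.submatrix_apply, finSumFinEquiv_apply_left, finSumFinEquiv_apply_right,
          fromBlocks_apply₁₂, wadaStabInv, Matrix.mul_add, Matrix.mul_one, Matrix.sub_apply,
          Matrix.add_apply]
        have hje : Fin.natAdd n (0 : Fin 1) = (⟨n, hnn⟩ : Fin (n + 1)) := by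
          apply Fin.ext; simp
        rw [hje, Matrix.mul_single_apply_same,
          Matrix.mul_single_apply_same]
        simp only [hpadval, hpadn]
        have hz1 := Matrix.mul_single_apply_of_ne (-(T 1)) (⟨n - 1, hn1⟩ : Fin (n + 1))
          (⟨n - 1, hn1⟩ : Fin (n + 1)) (Fin.castAdd 1 i) (⟨n, hnn⟩ : Fin (n + 1))
          hne_nn1 (pad n S)
        have hz3 := Matrix.mul_single_apply_of_ne (1 : LaurentPolynomial ℤ) (⟨n, hnn⟩ : Fin (n + 1))
          (⟨n - 1, hn1⟩ : Fin (n + 1)) (Fin.castAdd 1 i)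
          (⟨n, hnn⟩ : Fin (n + 1)) hne_nn1 (pad n S)
        have hone : (1 : Matrix (Fin (n + 1)) (Fin (n + 1)) (LaurentPolynomial ℤ))
            (Fin.castAdd 1 i) (⟨n, hnn⟩ : Fin (n + 1)) = 0 := by
          rw [Matrix.one_apply_ne]
          intro h; have := congrArg Fin.val h; simp at this; omega
        rw [hz1, hz3, hone]
        simp only [hB, Matrix.of_apply]
        ring
    | inr i =>
      obtain rfl : i = 0 := Subsingleton.elim i 0
      have hie : Fin.natAdd n (0 : Fin 1) = (⟨n, hnn⟩ : Fin (n + 1)) := by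
        apply Fin.ext; simp
      cases j with
      | inl j =>
        simp only [Matrix.submatrix_apply, finSumFinEquiv_apply_left, finSumFinEquiv_apply_right,
          fromBlocks_apply₂₁, wadaStabInv, Matrix.mul_add, Matrix.mul_one, Matrix.sub_apply,
          Matrix.add_apply, hie]
        have h1 : Fin.castAdd 1 j ≠ (⟨n, hnn⟩ : Fin (n + 1)) := by
          intro h; have := congrArg Fin.val h; simp at this; omega
        rw [Matrix.mul_single_apply_of_ne _ _ _ _ _ h1,
          Matrix.mul_single_apply_of_ne _ _ _ _ _ h1]
        have hone : (1 : Matrix (Fin (n + 1)) (Fin (n + 1)) (LaurentPolynomial ℤ))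
            (⟨n, hnn⟩ : Fin (n + 1)) (Fin.castAdd 1 j) = 0 := by
          rw [Matrix.one_apply_ne]
          intro h; have := congrArg Fin.val h; simp at this; omega
        by_cases hj : (j : ℕ) = n - 1
        · have h2 : Fin.castAdd 1 j = (⟨n - 1, hn1⟩ : Fin (n + 1)) := by
            apply Fin.ext; simpa using hj
          rw [h2, Matrix.mul_single_apply_same,
            Matrix.mul_single_apply_same]
          simp only [hpadrow]
          have hone' : (1 : Matrix (Fin (n + 1)) (Fin (n + 1)) (LaurentPolynomial ℤ))
              (⟨n, hnn⟩ : Fin (n + 1)) (⟨n - 1, hn1⟩ : Fin (n + 1)) = 0 := by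
            rw [Matrix.one_apply_ne]
            intro h; have := congrArg Fin.val h; simp at this; omega
          rw [hone']
          simp only [hC, Matrix.of_apply, hj, if_pos]
          simp [hn1n]
        · have h2 : Fin.castAdd 1 j ≠ (⟨n - 1, hn1⟩ : Fin (n + 1)) := by
            intro h; have := congrArg Fin.val h; simp at this; omega
          rw [Matrix.mul_single_apply_of_ne _ _ _ _ _ h2,
            Matrix.mul_single_apply_of_ne _ _ _ _ _ h2,
            hone]
          simp only [hpadrow]
          simp only [hC, Matrix.of_apply, hj, if_false]
          simp [j.isLt]
      | inr j =>
        obtain rfl : j = 0 := Subsingleton.elim j 0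
        simp only [Matrix.submatrix_apply, finSumFinEquiv_apply_right, fromBlocks_apply₂₂,
          wadaStabInv, Matrix.mul_add, Matrix.mul_one, Matrix.sub_apply, Matrix.add_apply, hie]
        rw [Matrix.mul_single_apply_same,
          Matrix.mul_single_apply_same]
        have hz1 := Matrix.mul_single_apply_of_ne (-(T 1)) (⟨n - 1, hn1⟩ : Fin (n + 1))
          (⟨n - 1, hn1⟩ : Fin (n + 1)) (⟨n, hnn⟩ : Fin (n + 1)) (⟨n, hnn⟩ : Fin (n + 1))
          hne_nn1 (pad n S)
        have hz3 := Matrix.mul_single_apply_of_ne (1 : LaurentPolynomial ℤ) (⟨n, hnn⟩ : Fin (n + 1))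
          (⟨n - 1, hn1⟩ : Fin (n + 1)) (⟨n, hnn⟩ : Fin (n + 1))
          (⟨n, hnn⟩ : Fin (n + 1)) hne_nn1 (pad n S)
        rw [hz1, hz3, Matrix.one_apply_eq]
        simp only [hpadrow]
        simp only [hD, Matrix.of_apply]
        simp [hn1n]
  have hschur : A - B * ⅟D * C = S - 1 := by
    apply Matrix.ext; intro i j
    rw [hinv]
    simp only [Matrix.sub_apply, Matrix.mul_apply, hA, hB, hC, hW, Matrix.of_apply,
      Fin.sum_univ_one]
    by_cases hj : (j : ℕ) = n - 1
    · simp only [hj, if_pos, mul_one]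
      have key : -(T 2) * S i ⟨n - 1, hn1n⟩ * T (-1) = -(T 1) * S i ⟨n - 1, hn1n⟩ := by
        calc -(T 2) * S i ⟨n - 1, hn1n⟩ * T (-1)
            = -((T 2 * T (-1)) * S i ⟨n - 1, hn1n⟩) := by ring
          _ = -(T 1) * S i ⟨n - 1, hn1n⟩ := by rw [h21]; ring
      rw [key]
      ring
    · simp only [hj, if_false]
      ring
  rw [← Matrix.det_submatrix_equiv_self finSumFinEquiv, hsub,
    Matrix.det_fromBlocks₂₂, hschur]
  congr 1
  simp [Matrix.det_fin_one, hD]
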